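/- Let l_1 ≤ l_2 ≤ ⋯ ≤ l_n be nonnegative reals and C ∈ ℝ. Let T* ∈ {0,…,n} satisfy L_{T*} ≤ C + 1 − T* and (if T* < n) L_{T*+1} > C − T*, where L_T = ∑_{i=1}^T l_i. Then the minimum over v ∈ {0,1}^n of max(∑_{i=1}^n v_i·l_i, C − ∑_{i=1}^n v_i) equals max(L_{T*}, C − T*). -/

import Mathlib

section Aux

variable {n : ℕ} (l : Fin n → ℝ)

private lemma aux_L_eq (T : ℕ) (hT : T ≤ n) :
    (∑ i : Fin n, if (i : ℕ) < T then l i else 0)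
      = ∑ j : Fin T, l (Fin.castLE hT j) := by
  classical
  rw [← Finset.sum_filter]
  have hset : Finset.filter (fun i : Fin n => (i : ℕ) < T) Finset.univ
      = Finset.image (Fin.castLE hT) Finset.univ := by
    ext x
    simp only [Finset.mem_filter, Finset.mem_univ, true_and, Finset.mem_image]
    constructor
    · intro hx; exact ⟨⟨x, hx⟩, rfl⟩
    · rintro ⟨j, rfl⟩; exact j.2
  rw [hset, Finset.sum_image (by intro a _ b _ h; exact Fin.castLE_injective hT h)]

private lemma aux_L_mono (hnonneg : ∀ i, 0 ≤ l i) {T T' : ℕ} (h : T ≤ T') :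
    (∑ i : Fin n, if (i : ℕ) < T then l i else 0)
      ≤ ∑ i : Fin n, if (i : ℕ) < T' then l i else 0 := by
  apply Finset.sum_le_sum
  intro i _
  by_cases hi : (i : ℕ) < T
  · simp [hi, lt_of_lt_of_le hi h]
  · by_cases hi' : (i : ℕ) < T' <;> simp [hi, hi', hnonneg i]

private lemma aux_sum_smallest (hnonneg : ∀ i, 0 ≤ l i)
    (hsorted : ∀ i j : Fin n, i ≤ j → l i ≤ l j) (S : Finset (Fin n)) :
    (∑ i : Fin n, if (i : ℕ) < S.card then l i else 0) ≤ ∑ i ∈ S, l i := by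
  classical
  have hk : S.card ≤ n := by
    simpa using Finset.card_le_card (Finset.subset_univ S)
  set k := S.card with hkdef
  set f : Fin k ↪o Fin n := S.orderEmbOfFin rfl with hf
  have hle : ∀ m (hm : m < k), m ≤ (f ⟨m, hm⟩ : ℕ) := by
    intro m
    induction m with
    | zero => intro _; exact Nat.zero_le _
    | succ p ih =>
      intro hm
      have hp : p < k := Nat.lt_of_succ_lt hm
      have h1 := ih hp
      have h2 : f ⟨p, hp⟩ < f ⟨p + 1, hm⟩ :=
        f.strictMono (by simp [Fin.lt_def])
      have h3 := Fin.lt_def.mp h2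
      omega
  have hS : S = Finset.image (fun j => f j) Finset.univ := by
    ext x
    simp only [Finset.mem_image, Finset.mem_univ, true_and]
    constructor
    · intro hx
      have : x ∈ Set.range f := by
        rw [show Set.range (f : Fin k → Fin n) = ↑S from S.range_orderEmbOfFin rfl]
        exact hx
      exact this
    · rintro ⟨j, rfl⟩; exact S.orderEmbOfFin_mem rfl j
  rw [aux_L_eq l k hk]
  calc (∑ j : Fin k, l (Fin.castLE hk j))
      ≤ ∑ j : Fin k, l (f j) := by
        apply Finset.sum_le_sum
        intro j _
        apply hsorted
        rw [Fin.le_def]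
        simpa using hle j j.2
    _ = ∑ i ∈ S, l i := by
        rw [hS, Finset.sum_image (by intro a _ b _ h; exact f.injective h)]

end Aux

/-- For sorted nonnegative losses and `T*` with `L_{T*} ≤ C + 1 − T*` and
(if `T* < n`) `L_{T*+1} > C − T*`, the minimum over `v ∈ {0,1}^n` of
`max(∑ v_i l_i, C − ∑ v_i)` equals `max(L_{T*}, C − T*)`. -/
theorem partial_optimization_value (n : ℕ) (l : Fin n → ℝ) (C : ℝ)
    (hsorted : ∀ i j : Fin n, i ≤ j → l i ≤ l j)
    (hnonneg : ∀ i, 0 ≤ l i)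
    (Tstar : ℕ) (hTn : Tstar ≤ n)
    (hfeas : (∑ i : Fin n, if (i : ℕ) < Tstar then l i else 0) ≤ C + 1 - Tstar)
    (hnext : Tstar < n →
      C - Tstar < (∑ i : Fin n, if (i : ℕ) < Tstar + 1 then l i else 0)) :
    Finset.univ.inf' Finset.univ_nonempty
        (fun v : Fin n → Bool =>
          max (∑ i, if v i then l i else 0) (C - ∑ i, if v i then (1 : ℝ) else 0)) =
      max (∑ i : Fin n, if (i : ℕ) < Tstar then l i else 0) (C - Tstar) := by
  classical
  apply le_antisymm
  · -- upper bound: take v* i = decide (i < Tstar)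
    have := Finset.inf'_le (b := fun i : Fin n => decide ((i : ℕ) < Tstar))
      (fun v : Fin n → Bool =>
        max (∑ i, if v i then l i else 0) (C - ∑ i, if v i then (1 : ℝ) else 0))
      (Finset.mem_univ _)
    refine le_trans this ?_
    have h1 : (∑ i : Fin n, if decide ((i : ℕ) < Tstar) then l i else 0)
        = ∑ i : Fin n, if (i : ℕ) < Tstar then l i else 0 := by
      simp
    have h2 : (∑ i : Fin n, if decide ((i : ℕ) < Tstar) then (1 : ℝ) else 0)
        = (Tstar : ℝ) := by
      simp only [decide_eq_true_eq]
      rw [← Finset.sum_filter]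
      rw [Finset.sum_const]
      have : (Finset.filter (fun i : Fin n => (i : ℕ) < Tstar) Finset.univ).card = Tstar := by
        have hset : Finset.filter (fun i : Fin n => (i : ℕ) < Tstar) Finset.univ
            = Finset.image (Fin.castLE hTn) Finset.univ := by
          ext x
          simp only [Finset.mem_filter, Finset.mem_univ, true_and, Finset.mem_image]
          constructor
          · intro hx; exact ⟨⟨x, hx⟩, rfl⟩
          · rintro ⟨j, rfl⟩; exact j.2
        rw [hset, Finset.card_image_of_injective _ (Fin.castLE_injective hTn)]
        simp
      rw [this]; simp
    rw [h1, h2]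
  · -- lower bound
    apply Finset.le_inf'
    intro v _
    set S : Finset (Fin n) := Finset.filter (fun i => v i = true) Finset.univ with hS
    have hsum1 : (∑ i, if v i then l i else 0) = ∑ i ∈ S, l i := by
      rw [← Finset.sum_filter]
    have hsum2 : (∑ i, if v i then (1 : ℝ) else 0) = (S.card : ℝ) := by
      rw [← Finset.sum_filter, Finset.sum_const]; simp [hS]
    rw [hsum1, hsum2]
    set k := S.card with hkdef
    have hkn : k ≤ n := by simpa [hkdef] using Finset.card_le_card (Finset.subset_univ S)
    have hLS : (∑ i : Fin n, if (i : ℕ) < k then l i else 0) ≤ ∑ i ∈ S, l i :=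
      aux_sum_smallest l hnonneg hsorted S
    rcases lt_trichotomy k Tstar with hlt | heq | hgt
    · -- k < Tstar : M ≤ C - k
      have hck : C + 1 - Tstar ≤ C - k := by
        have : (k : ℝ) + 1 ≤ (Tstar : ℝ) := by exact_mod_cast hlt
        linarith
      apply le_trans (max_le (le_trans hfeas hck) (by
        have : (k : ℝ) ≤ (Tstar : ℝ) := by exact_mod_cast hlt.le
        linarith)) (le_max_right _ _)
    · -- k = Tstar
      subst heq
      exact max_le_max hLS le_rfl
    · -- k > Tstar : M ≤ sum over S
      have hTltn : Tstar < n := lt_of_lt_of_le hgt hkn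
      have hmono : (∑ i : Fin n, if (i : ℕ) < Tstar + 1 then l i else 0)
          ≤ ∑ i : Fin n, if (i : ℕ) < k then l i else 0 :=
        aux_L_mono l hnonneg hgt
      have h1 : (∑ i : Fin n, if (i : ℕ) < Tstar then l i else 0) ≤ ∑ i ∈ S, l i :=
        le_trans (aux_L_mono l hnonneg (Nat.le_succ _)) (le_trans hmono hLS)
      have h2 : C - Tstar ≤ ∑ i ∈ S, l i :=
        le_trans (le_of_lt (hnext hTltn)) (le_trans hmono hLS)
      exact le_trans (max_le h1 h2) (le_max_left _ _)
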